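/- Let χ : {1,...,n} → {ℓ,r}, ε : {1,...,n} → I, and 𝒥 the set of maximal ε-monochromatic χ-intervals. If π ∈ BNC(χ) satisfies π ≤ ε and π does not refine the partition 𝒥 (i.e., some block of π meets two distinct elements of 𝒥), then π ∨ 𝒥 (the join in BNC(χ)) contains an isolated maximal ε-monochromatic χ-interval which is an inner block of π ∨ 𝒥. -/

import Mathlib

noncomputable def chiKey {n : ℕ} (χ : Fin n → Bool) (i : Fin n) : Lex (ℕ × ℕ) :=
  toLex (if χ i then 0 else 1, if χ i then (i : ℕ) else n - (i : ℕ))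

noncomputable def sChi {n : ℕ} (χ : Fin n → Bool) : Equiv.Perm (Fin n) :=
  Tuple.sort (chiKey χ)

def ltChi {n : ℕ} (χ : Fin n → Bool) (i j : Fin n) : Prop :=
  (sChi χ).symm i < (sChi χ).symm j

def IsChiInterval {n : ℕ} (χ : Fin n → Bool) (I : Set (Fin n)) : Prop :=
  ∀ a b c : Fin n, a ∈ I → c ∈ I → ltChi χ a b → ltChi χ b c → b ∈ I

def IsMono {n : ℕ} {ι : Type*} (ε : Fin n → ι) (I : Set (Fin n)) : Prop :=
  ∀ a ∈ I, ∀ b ∈ I, ε a = ε b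

def IsMaxMono {n : ℕ} {ι : Type*} (χ : Fin n → Bool) (ε : Fin n → ι)
    (J : Set (Fin n)) : Prop :=
  J.Nonempty ∧ IsChiInterval χ J ∧ IsMono ε J ∧
    ∀ K : Set (Fin n), IsChiInterval χ K → IsMono ε K → J ⊆ K → J = K

def IsNonCrossing {n : ℕ} (r : Setoid (Fin n)) : Prop :=
  ∀ a b c d : Fin n, a < b → b < c → c < d → r.r a c → r.r b d → r.r a b

def IsBNC {n : ℕ} (χ : Fin n → Bool) (π : Setoid (Fin n)) : Prop :=
  IsNonCrossing (π.comap (sChi χ))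


section
variable {n : ℕ} {ι : Type*} (χ : Fin n → Bool) (ε : Fin n → ι)

lemma ltChi_iff {a b : Fin n} : ltChi χ a b ↔ (((sChi χ).symm a : ℕ) < ((sChi χ).symm b : ℕ)) := by
  rw [ltChi, Fin.lt_iff_val_lt_val]

lemma pinj {a b : Fin n} (h : (((sChi χ).symm a : ℕ) = ((sChi χ).symm b : ℕ))) : a = b := by
  have := Fin.val_injective h
  exact (sChi χ).symm.injective this

lemma interval_union {I K : Set (Fin n)} (h1 : IsChiInterval χ I) (h2 : IsChiInterval χ K)
    {i : Fin n} (hi1 : i ∈ I) (hi2 : i ∈ K) : IsChiInterval χ (I ∪ K) := by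
  intro x y z hx hz hxy hyz
  rcases lt_trichotomy ((sChi χ).symm y) ((sChi χ).symm i) with h | h | h
  · rcases hx with hx | hx
    · exact Or.inl (h1 x y i hx hi1 hxy h)
    · exact Or.inr (h2 x y i hx hi2 hxy h)
  · have : y = i := (sChi χ).symm.injective h
    exact this ▸ Or.inl hi1
  · rcases hz with hz | hz
    · exact Or.inl (h1 i y z hi1 hz h hyz)
    · exact Or.inr (h2 i y z hi2 hz h hyz)

lemma maxmono_unique {I K : Set (Fin n)} (hI : IsMaxMono χ ε I) (hK : IsMaxMono χ ε K)
    {i : Fin n} (hi1 : i ∈ I) (hi2 : i ∈ K) : I = K := by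
  have hint := interval_union χ hI.2.1 hK.2.1 hi1 hi2
  have hmono : IsMono ε (I ∪ K) := by
    intro x hx y hy
    have hx' : ε x = ε i := by
      rcases hx with hx | hx
      · exact hI.2.2.1 x hx i hi1
      · exact hK.2.2.1 x hx i hi2
    have hy' : ε y = ε i := by
      rcases hy with hy | hy
      · exact hI.2.2.1 y hy i hi1
      · exact hK.2.2.1 y hy i hi2
    rw [hx', hy']
  have e1 := hI.2.2.2 _ hint hmono Set.subset_union_left
  have e2 := hK.2.2.2 _ hint hmono Set.subset_union_right
  rw [e1, ← e2]

end

noncomputable def pos {n : ℕ} (χ : Fin n → Bool) (i : Fin n) : ℕ := ((sChi χ).symm i : ℕ)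

lemma ltChi_iff' {n : ℕ} (χ : Fin n → Bool) {a b : Fin n} :
    ltChi χ a b ↔ pos χ a < pos χ b := by
  rw [ltChi, Fin.lt_iff_val_lt_val]; rfl

lemma pos_inj {n : ℕ} (χ : Fin n → Bool) {a b : Fin n} (h : pos χ a = pos χ b) : a = b :=
  (sChi χ).symm.injective (Fin.val_injective h)


/-- If `π ∈ BNC(χ)` satisfies `π ≤ ε` but `π` does not refine the partition `𝒥` of
maximal `ε`-monochromatic `χ`-intervals, then the join `π ⊔ 𝒥` contains an isolated
maximal `ε`-monochromatic `χ`-interval which is moreover an inner block of `π ⊔ 𝒥`: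
there are `j ∼_{π⊔𝒥} k` with `j ≺_χ i ≺_χ k` for every `i ∈ J`. -/
theorem exists_isolated_inner_interval {n : ℕ} {ι : Type*}
    (χ : Fin n → Bool) (ε : Fin n → ι) (π 𝒥 : Setoid (Fin n))
    (h𝒥 : ∀ a b : Fin n, 𝒥.r a b ↔ ∃ J : Set (Fin n), IsMaxMono χ ε J ∧ a ∈ J ∧ b ∈ J)
    (hπ : IsBNC χ π)
    (hmono : ∀ a b : Fin n, π.r a b → ε a = ε b)
    (hnref : ¬ π ≤ 𝒥) :
    ∃ J : Set (Fin n), IsMaxMono χ ε J ∧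
      (∀ a b : Fin n, (π ⊔ 𝒥).r a b → (a ∈ J ↔ b ∈ J)) ∧
      (∃ j k : Fin n, (π ⊔ 𝒥).r j k ∧ ∀ i ∈ J, ltChi χ j i ∧ ltChi χ i k) := by

  classical
  -- choose the maximal mono interval containing each point
  have hex : ∀ i : Fin n, ∃ J, IsMaxMono χ ε J ∧ i ∈ J := by
    intro i
    obtain ⟨J, hJ, hi, -⟩ := (h𝒥 i i).1 (𝒥.refl i)
    exact ⟨J, hJ, hi⟩
  choose Jof hJof hmemJof using hex
  have hrelJ : ∀ x y : Fin n, 𝒥.r x y ↔ y ∈ Jof x := by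
    intro x y
    constructor
    · intro h
      obtain ⟨K, hK, hx, hy⟩ := (h𝒥 x y).1 h
      exact (maxmono_unique χ ε hK (hJof x) hx (hmemJof x)) ▸ hy
    · intro h
      exact (h𝒥 x y).2 ⟨Jof x, hJof x, hmemJof x, h⟩
  -- noncrossing in positions
  have hcr : ∀ u v w z : Fin n, pos χ u < pos χ v → pos χ v < pos χ w → pos χ w < pos χ z →
      π.r u w → π.r v z → π.r u v := by
    intro u v w z h1 h2 h3 huw hvz
    have key : ∀ x y : Fin n,
        (π.comap (sChi χ)).r ((sChi χ).symm x) ((sChi χ).symm y) ↔ π.r x y := by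
      intro x y
      show π.r ((sChi χ) ((sChi χ).symm x)) ((sChi χ) ((sChi χ).symm y)) ↔ _
      rw [Equiv.apply_symm_apply, Equiv.apply_symm_apply]
    have := hπ ((sChi χ).symm u) ((sChi χ).symm v) ((sChi χ).symm w) ((sChi χ).symm z)
      (Fin.lt_iff_val_lt_val.mpr h1) (Fin.lt_iff_val_lt_val.mpr h2)
      (Fin.lt_iff_val_lt_val.mpr h3) ((key u w).mpr huw) ((key v z).mpr hvz)
    exact (key u v).mp this
  -- a minimal bad pair
  have hne0 : ∃ x y : Fin n, π.r x y ∧ ¬ 𝒥.r x y := by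
    by_contra h
    push_neg at h
    exact hnref fun x y hxy => h x y hxy
  have hne : ∃ d : ℕ, ∃ u v : Fin n,
      π.r u v ∧ ¬ 𝒥.r u v ∧ pos χ u < pos χ v ∧ pos χ v - pos χ u = d := by
    obtain ⟨u, v, huv, hnuv⟩ := hne0
    have huv' : u ≠ v := fun h => hnuv (h ▸ 𝒥.refl u)
    rcases lt_trichotomy (pos χ u) (pos χ v) with h | h | h
    · exact ⟨_, u, v, huv, hnuv, h, rfl⟩
    · exact absurd (pos_inj χ h) huv'
    · exact ⟨_, v, u, π.symm huv, fun hh => hnuv (𝒥.symm hh), h, rfl⟩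
  obtain ⟨a, b, hab, hnab, hpab, hd⟩ := Nat.find_spec hne
  have hminlt : ∀ u v : Fin n, π.r u v → ¬ 𝒥.r u v → pos χ u < pos χ v →
      pos χ v - pos χ u < pos χ b - pos χ a → False := by
    intro u v h1 h2 h3 h4
    rw [hd] at h4
    exact Nat.find_min hne h4 ⟨u, v, h1, h2, h3, rfl⟩
  have hεba : ε b = ε a := (hmono a b hab).symm
  -- there is a point between a and b of a different colour
  have hc : ∃ c : Fin n, pos χ a < pos χ c ∧ pos χ c < pos χ b ∧ ε c ≠ ε a := by
    by_contra h
    push_neg at h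
    set K : Set (Fin n) := {x | pos χ a ≤ pos χ x ∧ pos χ x ≤ pos χ b} with hKdef
    have hKa : a ∈ K := ⟨le_rfl, le_of_lt hpab⟩
    have hKb : b ∈ K := ⟨le_of_lt hpab, le_rfl⟩
    have hKval : ∀ x ∈ K, ε x = ε a := by
      intro x hx
      rcases eq_or_lt_of_le hx.1 with h1 | h1
      · obtain rfl := pos_inj χ h1
        rfl
      · rcases eq_or_lt_of_le hx.2 with h2 | h2
        · obtain rfl := pos_inj χ h2
          exact hεba
        · exact h x h1 h2
    have hKint : IsChiInterval χ K := by
      intro x y z hx hz hxy hyz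
      rw [ltChi_iff'] at hxy hyz
      exact ⟨le_trans hx.1 (le_of_lt hxy), le_trans (le_of_lt hyz) hz.2⟩
    have hUint := interval_union χ (hJof a).2.1 hKint (hmemJof a) hKa
    have hUmono : IsMono ε (Jof a ∪ K) := by
      have hval : ∀ x ∈ Jof a ∪ K, ε x = ε a := by
        intro x hx
        rcases hx with hx | hx
        · exact (hJof a).2.2.1 x hx a (hmemJof a)
        · exact hKval x hx
      intro x hx y hy
      rw [hval x hx, hval y hy]
    have heq := (hJof a).2.2.2 _ hUint hUmono Set.subset_union_left
    have hbJ : b ∈ Jof a := heq ▸ (Or.inr hKb : b ∈ Jof a ∪ K)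
    exact hnab ((hrelJ a b).2 hbJ)
  obtain ⟨c, hac, hcb, hεc⟩ := hc
  set J := Jof c with hJdef
  have hεJ : ∀ x ∈ J, ε x = ε c := fun x hx => (hJof c).2.2.1 x hx c (hmemJof c)
  -- J lies strictly between a and b
  have hrange : ∀ i ∈ J, pos χ a < pos χ i ∧ pos χ i < pos χ b := by
    intro i hi
    constructor
    · by_contra h
      push_neg at h
      rcases eq_or_lt_of_le h with h1 | h1
      · obtain rfl := pos_inj χ h1
        exact hεc (hεJ i hi).symm
      · have haJ : a ∈ J := (hJof c).2.1 i a c hi (hmemJof c)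
          ((ltChi_iff' χ).2 h1) ((ltChi_iff' χ).2 hac)
        exact hεc (hεJ a haJ).symm
    · by_contra h
      push_neg at h
      rcases eq_or_lt_of_le h with h1 | h1
      · obtain rfl := pos_inj χ h1.symm
        exact hεc ((hεJ i hi).symm.trans hεba)
      · have hbJ : b ∈ J := (hJof c).2.1 c b i (hmemJof c) hi
          ((ltChi_iff' χ).2 hcb) ((ltChi_iff' χ).2 h1)
        exact hεc (((hεJ b hbJ).symm.trans hεba))
  have haJ : a ∉ J := fun h => lt_irrefl _ (hrange a h).1
  have hbJ : b ∉ J := fun h => lt_irrefl _ (hrange b h).2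
  have hnotJrel : ∀ x ∈ J, ∀ y : Fin n, y ∉ J → ¬ 𝒥.r x y := by
    intro x hx y hy hrel
    have e : Jof x = J := maxmono_unique χ ε (hJof x) (hJof c) (hmemJof x) hx
    exact hy (e ▸ (hrelJ x y).1 hrel)
  -- J is saturated under π
  have hpisat : ∀ x ∈ J, ∀ y : Fin n, π.r x y → y ∈ J := by
    intro x hx y hxy
    by_contra hy
    have hnrel : ¬ 𝒥.r x y := hnotJrel x hx y hy
    have hx1 := (hrange x hx).1
    have hx2 := (hrange x hx).2
    have hnxa : ¬ 𝒥.r a x := fun hh => hnotJrel x hx a haJ (𝒥.symm hh)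
    have hnxb : ¬ 𝒥.r x b := hnotJrel x hx b hbJ
    rcases lt_trichotomy (pos χ y) (pos χ a) with h | h | h
    · -- y < a < x < b, y~x and a~b give y~a, hence a~x
      have h1 : π.r y a := hcr y a x b h hx1 hx2 (π.symm hxy) hab
      have h2 : π.r a x := π.trans (π.symm h1) (π.symm hxy)
      exact hminlt a x h2 hnxa hx1 (by omega)
    · obtain rfl := pos_inj χ h
      exact hminlt y x (π.symm hxy) hnxa hx1 (by omega)
    · rcases lt_trichotomy (pos χ y) (pos χ b) with h' | h' | h'
      · rcases lt_trichotomy (pos χ x) (pos χ y) with hh | hh | hh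
        · exact hminlt x y hxy hnrel hh (by omega)
        · exact hy ((pos_inj χ hh) ▸ hx)
        · exact hminlt y x (π.symm hxy) (fun hh2 => hnrel (𝒥.symm hh2)) hh (by omega)
      · obtain rfl := pos_inj χ h'
        exact hminlt x y hxy hnxb hx2 (by omega)
      · -- a < x < b < y, a~b and x~y give a~x
        have h1 : π.r a x := hcr a x b y hx1 hx2 h' hab hxy
        exact hminlt a x h1 hnxa hx1 (by omega)
  -- J is saturated under 𝒥
  have hJsat : ∀ x ∈ J, ∀ y : Fin n, 𝒥.r x y → y ∈ J := by
    intro x hx y hxy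
    have e : Jof x = J := maxmono_unique χ ε (hJof x) (hJof c) (hmemJof x) hx
    exact e ▸ (hrelJ x y).1 hxy
  -- hence saturated under the join
  have hsat : ∀ x y : Fin n, (π ⊔ 𝒥).r x y → (x ∈ J ↔ y ∈ J) := by
    intro x y h
    rw [Setoid.sup_eq_eqvGen] at h
    have h' : Relation.EqvGen (fun u v : Fin n => π.r u v ∨ 𝒥.r u v) x y := h
    clear h
    induction h' with
    | rel u v huv =>
      rcases huv with huv | huv
      · exact ⟨fun hu => hpisat u hu v huv, fun hv => hpisat v hv u (π.symm huv)⟩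
      · exact ⟨fun hu => hJsat u hu v huv, fun hv => hJsat v hv u (𝒥.symm huv)⟩
    | refl u => exact Iff.rfl
    | symm u v _ ih => exact ih.symm
    | trans u v w _ _ ih1 ih2 => exact ih1.trans ih2
  refine ⟨J, hJof c, hsat, a, b, ?_, ?_⟩
  · exact (le_sup_left : π ≤ π ⊔ 𝒥) hab
  · intro i hi
    exact ⟨(ltChi_iff' χ).2 (hrange i hi).1, (ltChi_iff' χ).2 (hrange i hi).2⟩
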